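/- arXiv:2604.23464 — 3 statements merged into one kernel-verified Lean document; each statement's English description precedes it below -/
import Mathlib

section
/- Define the random variable m̂ = E[(X − Y)² | 𝒢] − v − b² + 2c + 2·b·d. Then E[m̂] = E[(X − θ)²]; that is, m̂ is an unbiased estimator of the oracle training mean squared error of the model-based estimator X for the constant target θ. -/
open MeasureTheory
open scoped ENNReal

/-- The random variable
`m̂ = E[(X − Y)² | 𝒢] − v − b² + 2c + 2·b·d` satisfies `E[m̂] = E[(X − θ)²]`,
i.e. it is an unbiased estimator of the oracle training mean squared error of
the model-based estimator `X` for the constant target `θ`.  Here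
`b = E[Y|𝒢] − θ`, `d = E[X|𝒢] − θ`, `v = E[Y²|𝒢] − (E[Y|𝒢])²`, and
`c = E[X·Y|𝒢] − E[X|𝒢]·E[Y|𝒢]`. -/
theorem cv_unbiased_oracle_training_mse
    {Ω : Type*} {F : MeasurableSpace Ω} {μ : Measure Ω} [IsProbabilityMeasure μ]
    {G : MeasurableSpace Ω} (hG : G ≤ F)
    (θ : ℝ) (X Y : Ω → ℝ)
    (hX : MemLp X 2 μ) (hY : MemLp Y 2 μ) :
    ∫ ω, ((μ[(fun x => (X x - Y x) ^ 2)|G]) ω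
        - ((μ[(fun x => Y x ^ 2)|G]) ω - ((μ[Y|G]) ω) ^ 2)
        - ((μ[Y|G]) ω - θ) ^ 2
        + 2 * ((μ[(fun x => X x * Y x)|G]) ω - (μ[X|G]) ω * (μ[Y|G]) ω)
        + 2 * ((μ[Y|G]) ω - θ) * ((μ[X|G]) ω - θ)) ∂μ
      = ∫ ω, (X ω - θ) ^ 2 ∂μ := by
  have h2 : (1:ℝ≥0∞) ≤ 2 := one_le_two
  have hpqr : (1:ℝ≥0∞)/1 = 1/2 + 1/2 := by
    rw [ENNReal.div_add_div_same, div_one,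
      show (1:ℝ≥0∞) + 1 = 2 from one_add_one_eq_two,
      ENNReal.div_self two_ne_zero ENNReal.ofNat_ne_top]
  have hmul : ∀ (f g : Ω → ℝ), MemLp f 2 μ → MemLp g 2 μ →
      Integrable (fun x => f x * g x) μ := by
    intro f g hf hg
    have := memLp_one_iff_integrable.mp (hg.smul (r := 1) hf (hpqr := ⟨by simpa [one_div] using hpqr.symm⟩))
    simpa [smul_eq_mul, Pi.mul_def] using this
  have hXi : Integrable X μ := hX.integrable h2
  have hYi : Integrable Y μ := hY.integrable h2
  have hX2 : Integrable (fun x => X x ^ 2) μ := by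
    simpa [sq] using hmul X X hX hX
  have hY2 : Integrable (fun x => Y x ^ 2) μ := hmul Y Y hY hY |>.congr
    (Filter.Eventually.of_forall fun x => by ring)
  have hXY : Integrable (fun x => X x * Y x) μ := hmul X Y hX hY
  have hD2 : Integrable (fun x => (X x - Y x) ^ 2) μ := by
    simpa [sq] using hmul _ _ (hX.sub hY) (hX.sub hY)
  -- conditional expectation integrals
  have c1 : ∫ ω, (μ[(fun x => (X x - Y x) ^ 2)|G]) ω ∂μ
      = ∫ ω, (X ω - Y ω) ^ 2 ∂μ := integral_condExp hG
  have c2 : ∫ ω, (μ[(fun x => Y x ^ 2)|G]) ω ∂μ = ∫ ω, Y ω ^ 2 ∂μ :=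
    integral_condExp hG
  have c3 : ∫ ω, (μ[(fun x => X x * Y x)|G]) ω ∂μ = ∫ ω, X ω * Y ω ∂μ :=
    integral_condExp hG
  have c4 : ∫ ω, (μ[X|G]) ω ∂μ = ∫ ω, X ω ∂μ := integral_condExp hG
  -- pointwise simplification
  have key : ∀ ω, ((μ[(fun x => (X x - Y x) ^ 2)|G]) ω
        - ((μ[(fun x => Y x ^ 2)|G]) ω - ((μ[Y|G]) ω) ^ 2)
        - ((μ[Y|G]) ω - θ) ^ 2
        + 2 * ((μ[(fun x => X x * Y x)|G]) ω - (μ[X|G]) ω * (μ[Y|G]) ω)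
        + 2 * ((μ[Y|G]) ω - θ) * ((μ[X|G]) ω - θ))
      = ((μ[(fun x => (X x - Y x) ^ 2)|G]) ω - (μ[(fun x => Y x ^ 2)|G]) ω
        + 2 * (μ[(fun x => X x * Y x)|G]) ω + (θ ^ 2 - 2 * θ * (μ[X|G]) ω)) :=
    fun ω => by ring
  rw [integral_congr_ae (Filter.Eventually.of_forall key)]
  have i1 : Integrable (μ[(fun x => (X x - Y x) ^ 2)|G]) μ := integrable_condExp
  have i2 : Integrable (μ[(fun x => Y x ^ 2)|G]) μ := integrable_condExp
  have i3 : Integrable (μ[(fun x => X x * Y x)|G]) μ := integrable_condExp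
  have i4 : Integrable (μ[X|G]) μ := integrable_condExp
  have i1' : Integrable (fun ω => (μ[(fun x => (X x - Y x) ^ 2)|G]) ω) μ := i1
  have i2' : Integrable (fun ω => (μ[(fun x => Y x ^ 2)|G]) ω) μ := i2
  have iA : Integrable (fun ω => (μ[(fun x => (X x - Y x) ^ 2)|G]) ω
      - (μ[(fun x => Y x ^ 2)|G]) ω) μ := i1.sub i2
  have iB : Integrable (fun ω => 2 * (μ[(fun x => X x * Y x)|G]) ω) μ := i3.const_mul 2
  have iAB : Integrable (fun ω => (μ[(fun x => (X x - Y x) ^ 2)|G]) ω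
      - (μ[(fun x => Y x ^ 2)|G]) ω + 2 * (μ[(fun x => X x * Y x)|G]) ω) μ := iA.add iB
  have iC : Integrable (fun ω => θ ^ 2 - 2 * θ * (μ[X|G]) ω) μ :=
    (integrable_const _).sub (i4.const_mul _)
  rw [integral_add iAB iC, integral_add iA iB, integral_sub i1' i2', integral_const_mul]
  have last : ∫ ω, (θ ^ 2 - 2 * θ * (μ[X|G]) ω) ∂μ
      = θ ^ 2 - 2 * θ * ∫ ω, (μ[X|G]) ω ∂μ := by
    rw [integral_sub (integrable_const _) (i4.const_mul (2*θ)), integral_const_mul,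
      integral_const]
    simp
  rw [last, c1, c2, c3, c4]
  have j2 : Integrable (fun ω => 2 * (X ω * Y ω)) μ := hXY.const_mul 2
  have jS : Integrable (fun ω => X ω ^ 2 - 2 * (X ω * Y ω)) μ := hX2.sub j2
  have eD : ∫ ω, (X ω - Y ω) ^ 2 ∂μ
      = ∫ ω, X ω ^ 2 ∂μ - 2 * ∫ ω, X ω * Y ω ∂μ + ∫ ω, Y ω ^ 2 ∂μ := by
    have h : ∫ ω, (X ω - Y ω) ^ 2 ∂μ
        = ∫ ω, (X ω ^ 2 - 2 * (X ω * Y ω) + Y ω ^ 2) ∂μ :=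
      integral_congr_ae (Filter.Eventually.of_forall fun ω => by ring)
    rw [h, integral_add jS hY2, integral_sub hX2 j2, integral_const_mul]
  have eT : ∫ ω, (X ω - θ) ^ 2 ∂μ
      = ∫ ω, X ω ^ 2 ∂μ - 2 * θ * ∫ ω, X ω ∂μ + θ ^ 2 := by
    have : ∫ ω, (X ω - θ) ^ 2 ∂μ
        = ∫ ω, (X ω ^ 2 - 2 * θ * X ω + θ ^ 2) ∂μ :=
      integral_congr_ae (Filter.Eventually.of_forall fun ω => by ring)
    have j1 : Integrable (fun ω => 2 * θ * X ω) μ := hXi.const_mul _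
    have jT : Integrable (fun ω => X ω ^ 2 - 2 * θ * X ω) μ := hX2.sub j1
    rw [this, integral_add jT (integrable_const _),
      integral_sub hX2 j1, integral_const_mul, integral_const]
    simp
  rw [eD, eT]
  ring
end

section
/- Define the adjusted score as the random variable score = E[(X − Y)² | 𝒢] − v + 2c. Then E[score] = E[(X − θ)²] + E[b²] − 2·E[b·d]; that is, the expected adjusted score equals the oracle training mean squared error of X plus the expected squared conditional bias of the direct estimator minus twice the expected product of the two conditional biases. -/
open MeasureTheory

/-- Product of two `L²` functions is integrable. -/
lemma integrable_mul_of_memL2 {Ω : Type*} {F : MeasurableSpace Ω} {μ : Measure Ω}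
    {f g : Ω → ℝ} (hf : MemLp f 2 μ) (hg : MemLp g 2 μ) :
    Integrable (fun ω => f ω * g ω) μ := by
  have hpqr : (1 : ENNReal) / 1 = 1 / 2 + 1 / 2 := by
    rw [ENNReal.div_add_div_same, one_add_one_eq_two,
      ENNReal.div_self two_ne_zero ENNReal.ofNat_ne_top, div_one]
  have h : MemLp (f • g) 1 μ := hg.smul hf (hpqr := ⟨by simpa [one_div] using hpqr.symm⟩)
  exact (memLp_one_iff_integrable.mp h).congr
    (Filter.Eventually.of_forall fun x => rfl)

/-- The conditional expectation of an `L²` function is in `L²`. -/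
lemma memL2_condexp {Ω : Type*} {F : MeasurableSpace Ω} {μ : Measure Ω}
    [IsProbabilityMeasure μ] {G : MeasurableSpace Ω} (hG : G ≤ F)
    {f : Ω → ℝ} (hf : MemLp f 2 μ) : MemLp (μ[f|G]) 2 μ := by
  have hmem : MemLp ((condExpL2 ℝ ℝ hG (hf.toLp f)).1 : Ω → ℝ) 2 μ :=
    Lp.memLp (condExpL2 ℝ ℝ hG (hf.toLp f)).1
  have h : ((condExpL2 ℝ ℝ hG (hf.toLp f)).1 : Ω → ℝ) =ᵐ[μ] μ[f|G] := by
    refine ae_eq_condExp_of_forall_setIntegral_eq hG (hf.integrable one_le_two)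
      (fun s _ hμs => ?_) (fun s hs hμs => ?_) ?_
    · exact Integrable.restrict (hmem.integrable one_le_two)
    · rw [show ((condExpL2 ℝ ℝ hG (hf.toLp f)).1 : Ω → ℝ)
          = (condExpL2 ℝ ℝ hG (hf.toLp f) : Ω → ℝ) from rfl,
        integral_condExpL2_eq hG (hf.toLp f) hs hμs.ne]
      exact integral_congr_ae (ae_restrict_of_ae hf.coeFn_toLp)
    · exact lpMeas.aestronglyMeasurable _
  exact hmem.ae_eq h

/-- For the adjusted score
`score = E[(X − Y)² | 𝒢] − v + 2c`, one has
`E[score] = E[(X − θ)²] + E[b²] − 2·E[b·d]`: the expected adjusted score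
equals the oracle training mean squared error of `X` plus the expected
squared conditional bias of the direct estimator minus twice the expected
product of the two conditional biases.  Here `b = E[Y|𝒢] − θ`,
`d = E[X|𝒢] − θ`, `v = E[Y²|𝒢] − (E[Y|𝒢])²`, and
`c = E[X·Y|𝒢] − E[X|𝒢]·E[Y|𝒢]`. -/
theorem expected_adjusted_score_decomposition
    {Ω : Type*} {F : MeasurableSpace Ω} {μ : Measure Ω} [IsProbabilityMeasure μ]
    {G : MeasurableSpace Ω} (hG : G ≤ F)
    (θ : ℝ) (X Y : Ω → ℝ)
    (hX : MemLp X 2 μ) (hY : MemLp Y 2 μ) :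
    ∫ ω, ((μ[(fun x => (X x - Y x) ^ 2)|G]) ω
        - ((μ[(fun x => Y x ^ 2)|G]) ω - ((μ[Y|G]) ω) ^ 2)
        + 2 * ((μ[(fun x => X x * Y x)|G]) ω - (μ[X|G]) ω * (μ[Y|G]) ω)) ∂μ
      = (∫ ω, (X ω - θ) ^ 2 ∂μ)
        + (∫ ω, ((μ[Y|G]) ω - θ) ^ 2 ∂μ)
        - 2 * ∫ ω, ((μ[Y|G]) ω - θ) * ((μ[X|G]) ω - θ) ∂μ := by
  have hXi : Integrable X μ := hX.integrable one_le_two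
  have hYi : Integrable Y μ := hY.integrable one_le_two
  have hX2 : Integrable (fun x => X x ^ 2) μ := hX.integrable_sq
  have hY2 : Integrable (fun x => Y x ^ 2) μ := hY.integrable_sq
  have hXY : Integrable (fun x => X x * Y x) μ := integrable_mul_of_memL2 hX hY
  have hm2 : MemLp (μ[Y|G]) 2 μ := memL2_condexp hG hY
  have hn2 : MemLp (μ[X|G]) 2 μ := memL2_condexp hG hX
  set m := μ[Y|G] with hm
  set n := μ[X|G] with hn
  -- key conditional-expectation identity
  have key : μ[(fun x => (X x - Y x) ^ 2)|G]
      =ᵐ[μ] fun ω => (μ[(fun x => X x ^ 2)|G]) ω + (μ[(fun x => Y x ^ 2)|G]) ω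
        - 2 * (μ[(fun x => X x * Y x)|G]) ω := by
    have heq : (fun x => (X x - Y x) ^ 2)
        = ((fun x => X x ^ 2) + (fun x => Y x ^ 2)) - (2 : ℝ) • (fun x => X x * Y x) := by
      funext x; simp [Pi.sub_apply, Pi.add_apply]; ring
    rw [heq]
    calc μ[((fun x => X x ^ 2) + (fun x => Y x ^ 2)) - (2 : ℝ) • (fun x => X x * Y x)|G]
        =ᵐ[μ] μ[((fun x => X x ^ 2) + (fun x => Y x ^ 2))|G]
            - μ[(2 : ℝ) • (fun x => X x * Y x)|G] :=
          condExp_sub (hX2.add hY2) (hXY.smul (2 : ℝ)) G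
      _ =ᵐ[μ] fun ω => (μ[(fun x => X x ^ 2)|G]) ω + (μ[(fun x => Y x ^ 2)|G]) ω
            - 2 * (μ[(fun x => X x * Y x)|G]) ω := by
          filter_upwards [condExp_add (m := G) hX2 hY2, condExp_smul (μ := μ) (m := G)
            (2 : ℝ) (fun x => X x * Y x)] with ω h1 h2
          simp only [Pi.sub_apply, h1, h2, Pi.add_apply, Pi.smul_apply, smul_eq_mul]
  -- rewrite the LHS integrand a.e.
  have hLHS : ∫ ω, ((μ[(fun x => (X x - Y x) ^ 2)|G]) ω
        - ((μ[(fun x => Y x ^ 2)|G]) ω - (m ω) ^ 2)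
        + 2 * ((μ[(fun x => X x * Y x)|G]) ω - n ω * m ω)) ∂μ
      = ∫ ω, ((μ[(fun x => X x ^ 2)|G]) ω + (m ω ^ 2 - 2 * (n ω * m ω))) ∂μ := by
    refine integral_congr_ae ?_
    filter_upwards [key] with ω hω
    rw [hω]; ring
  rw [hLHS]
  have hEsq : Integrable (fun ω => (μ[(fun x => X x ^ 2)|G]) ω) μ := integrable_condExp
  have hmsq : Integrable (fun ω => m ω ^ 2) μ := hm2.integrable_sq
  have hnm : Integrable (fun ω => n ω * m ω) μ := integrable_mul_of_memL2 hn2 hm2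
  have hmi : Integrable m μ := integrable_condExp
  have hni : Integrable n μ := integrable_condExp
  have hg1 : Integrable (fun ω => m ω ^ 2 - 2 * (n ω * m ω)) μ :=
    hmsq.sub (hnm.const_mul 2)
  rw [integral_add hEsq hg1, integral_sub hmsq (hnm.const_mul 2), integral_const_mul,
    integral_condExp hG]
  -- expand the RHS
  have hR1 : ∫ ω, (X ω - θ) ^ 2 ∂μ
      = (∫ ω, X ω ^ 2 ∂μ) - 2 * θ * (∫ ω, X ω ∂μ) + θ ^ 2 := by
    have : ∀ ω, (X ω - θ) ^ 2 = X ω ^ 2 - 2 * θ * X ω + θ ^ 2 := fun ω => by ring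
    simp_rw [this]
    have h1 : Integrable (fun ω => X ω ^ 2 - 2 * θ * X ω) μ := hX2.sub (hXi.const_mul (2 * θ))
    rw [integral_add h1 (integrable_const _),
      integral_sub hX2 (hXi.const_mul (2 * θ)), integral_const_mul, integral_const]
    simp
  have hR2 : ∫ ω, (m ω - θ) ^ 2 ∂μ
      = (∫ ω, m ω ^ 2 ∂μ) - 2 * θ * (∫ ω, m ω ∂μ) + θ ^ 2 := by
    have : ∀ ω, (m ω - θ) ^ 2 = m ω ^ 2 - 2 * θ * m ω + θ ^ 2 := fun ω => by ring
    simp_rw [this]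
    have h1 : Integrable (fun ω => m ω ^ 2 - 2 * θ * m ω) μ := hmsq.sub (hmi.const_mul (2 * θ))
    rw [integral_add h1 (integrable_const _),
      integral_sub hmsq (hmi.const_mul (2 * θ)), integral_const_mul, integral_const]
    simp
  have hR3 : ∫ ω, (m ω - θ) * (n ω - θ) ∂μ
      = (∫ ω, n ω * m ω ∂μ) - θ * (∫ ω, m ω ∂μ) - θ * (∫ ω, n ω ∂μ) + θ ^ 2 := by
    have : ∀ ω, (m ω - θ) * (n ω - θ) = n ω * m ω - θ * m ω - θ * n ω + θ ^ 2 :=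
      fun ω => by ring
    simp_rw [this]
    have h1 : Integrable (fun ω => n ω * m ω - θ * m ω) μ := hnm.sub (hmi.const_mul θ)
    have h2 : Integrable (fun ω => n ω * m ω - θ * m ω - θ * n ω) μ := h1.sub (hni.const_mul θ)
    rw [integral_add h2 (integrable_const _),
      integral_sub h1 (hni.const_mul θ),
      integral_sub hnm (hmi.const_mul θ), integral_const_mul, integral_const_mul, integral_const]
    simp
  rw [hR1, hR2, hR3]
  have hEm : ∫ ω, m ω ∂μ = ∫ ω, Y ω ∂μ := integral_condExp hG
  have hEn : ∫ ω, n ω ∂μ = ∫ ω, X ω ∂μ := integral_condExp hG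
  rw [hEm, hEn]
  ring
end

section
/- Consider sequences indexed by the sample size n: sub-σ-algebras 𝒢ₙ ⊆ ℱ and random variables Yₙ, Xₙ¹, Xₙ² ∈ L²(P) with E[Yₙ] = θ for every n. Define bₙ = E[Yₙ | 𝒢ₙ] − θ, dₙʲ = E[Xₙʲ | 𝒢ₙ] − θ, and eₙ = −2·Cov(bₙ, dₙ¹ − dₙ²). If Var(Yₙ) → 0 as n → ∞ and there is a constant C with Var(Xₙʲ) ≤ C for all n and j = 1, 2, then eₙ → 0; consequently, with vₙ and cₙʲ the conditional variance of Yₙ and conditional covariance of Xₙʲ and Yₙ given 𝒢ₙ, and scoreₙʲ = E[(Xₙʲ − Yₙ)² | 𝒢ₙ] − vₙ + 2cₙʲ, the quantity E[scoreₙ¹ − scoreₙ²] − (E[(Xₙ¹ − θ)²] − E[(Xₙ² − θ)²]) converges to 0. -/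
open MeasureTheory Filter
open scoped ENNReal

section sect1
variable {Ω : Type*} {F : MeasurableSpace Ω} {μ : Measure Ω} [IsProbabilityMeasure μ]

omit [IsProbabilityMeasure μ] in
lemma aux_integrable_mul {f g : Ω → ℝ} (hf : MemLp f 2 μ) (hg : MemLp g 2 μ) :
    Integrable (fun ω => f ω * g ω) μ := by
  have h : (1 : ℝ≥0∞) / 1 = 1 / 2 + 1 / 2 := by
    simp [ENNReal.inv_two_add_inv_two]
  exact memLp_one_iff_integrable.mp (hg.smul hf (hpqr := ⟨by simpa [one_div] using h.symm⟩))

omit [IsProbabilityMeasure μ] in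
lemma aux_integrable_sq {f : Ω → ℝ} (hf : MemLp f 2 μ) :
    Integrable (fun ω => f ω ^ 2) μ := by
  simpa [sq] using aux_integrable_mul hf hf

omit [IsProbabilityMeasure μ] in
lemma aux_cauchy_schwarz {f g : Ω → ℝ} (hf : MemLp f 2 μ) (hg : MemLp g 2 μ) :
    |∫ ω, f ω * g ω ∂μ| ≤ Real.sqrt (∫ ω, f ω ^ 2 ∂μ) * Real.sqrt (∫ ω, g ω ^ 2 ∂μ) := by
  set F' := hf.toLp f with hF'
  set G' := hg.toLp g with hG'
  have hFf : F' =ᵐ[μ] f := hf.coeFn_toLp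
  have hGg : G' =ᵐ[μ] g := hg.coeFn_toLp
  have hinner : @inner ℝ _ _ F' G' = ∫ ω, f ω * g ω ∂μ := by
    rw [L2.inner_def]
    refine integral_congr_ae ?_
    filter_upwards [hFf, hGg] with ω h1 h2
    simp [h1, h2, RCLike.inner_apply, conj_trivial, mul_comm]
  have hnF : ‖F'‖ = Real.sqrt (∫ ω, f ω ^ 2 ∂μ) := by
    have : @inner ℝ _ _ F' F' = ∫ ω, f ω ^ 2 ∂μ := by
      rw [L2.inner_def]
      refine integral_congr_ae ?_
      filter_upwards [hFf] with ω h1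
      simp [h1, RCLike.inner_apply, conj_trivial, sq]
    rw [real_inner_self_eq_norm_sq] at this
    rw [← this, Real.sqrt_sq (norm_nonneg _)]
  have hnG : ‖G'‖ = Real.sqrt (∫ ω, g ω ^ 2 ∂μ) := by
    have : @inner ℝ _ _ G' G' = ∫ ω, g ω ^ 2 ∂μ := by
      rw [L2.inner_def]
      refine integral_congr_ae ?_
      filter_upwards [hGg] with ω h1
      simp [h1, RCLike.inner_apply, conj_trivial, sq]
    rw [real_inner_self_eq_norm_sq] at this
    rw [← this, Real.sqrt_sq (norm_nonneg _)]
  calc |∫ ω, f ω * g ω ∂μ| = |@inner ℝ _ _ F' G'| := by rw [hinner]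
    _ ≤ ‖F'‖ * ‖G'‖ := abs_real_inner_le_norm _ _
    _ = _ := by rw [hnF, hnG]

end sect1

lemma aux_condExp_L2 {Ω : Type*} {m F : MeasurableSpace Ω} {μ : @Measure Ω F}
    [IsProbabilityMeasure μ] (hm : m ≤ F) {f : Ω → ℝ} (hf : MemLp f 2 μ) :
    MemLp (μ[f|m]) 2 μ ∧ ∫ ω, (μ[f|m]) ω ^ 2 ∂μ ≤ ∫ ω, f ω ^ 2 ∂μ := by
  set F' := hf.toLp f with hF'
  set G' := (condExpL2 ℝ ℝ hm F' : Lp ℝ 2 μ) with hG'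
  have hGc : (G' : Ω → ℝ) =ᵐ[μ] μ[f|m] := by
    refine ae_eq_condExp_of_forall_setIntegral_eq hm (hf.integrable one_le_two)
      (fun s hs hμs => ?_) (fun s hs hμs => ?_) ?_
    · exact ((Lp.memLp G').integrable one_le_two).integrableOn
    · rw [integral_condExpL2_eq hm F' hs hμs.ne]
      exact setIntegral_congr_ae (hm s hs) (hf.coeFn_toLp.mono fun x hx _ => hx)
    · exact aestronglyMeasurable_condExpL2 hm F'
  constructor
  · exact (Lp.memLp G').ae_eq hGc
  · have h1 : ∫ ω, (μ[f|m]) ω ^ 2 ∂μ = ‖G'‖ ^ 2 := by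
      rw [← real_inner_self_eq_norm_sq, L2.inner_def]
      refine integral_congr_ae ?_
      filter_upwards [hGc] with ω h1
      simp [← h1, RCLike.inner_apply, conj_trivial, sq]
    have h2 : ∫ ω, f ω ^ 2 ∂μ = ‖F'‖ ^ 2 := by
      rw [← real_inner_self_eq_norm_sq, L2.inner_def]
      refine integral_congr_ae ?_
      filter_upwards [hf.coeFn_toLp] with ω h1
      simp [hF', h1, RCLike.inner_apply, conj_trivial, sq]
    rw [h1, h2]
    have h3 : ‖G'‖ ≤ ‖F'‖ := by
      simpa using norm_condExpL2_le (E := ℝ) (𝕜 := ℝ) hm F'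
    exact pow_le_pow_left₀ (norm_nonneg _) h3 2

lemma aux_centered_sq {Ω : Type*} {F : MeasurableSpace Ω} {μ : @Measure Ω F}
    [IsProbabilityMeasure μ] {f : Ω → ℝ} (hf : MemLp f 2 μ) (c : ℝ) :
    ∫ ω, (f ω - c) ^ 2 ∂μ
      = (∫ ω, f ω ^ 2 ∂μ) - 2 * c * (∫ ω, f ω ∂μ) + c ^ 2 := by
  have hint : Integrable f μ := hf.integrable one_le_two
  have hsq : Integrable (fun ω => f ω ^ 2) μ := aux_integrable_sq hf
  rw [show (fun ω => (f ω - c) ^ 2)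
      = fun ω => f ω ^ 2 - 2 * c * f ω + c ^ 2 from funext fun ω => by ring,
    integral_add (show Integrable (fun ω => f ω ^ 2 - 2 * c * f ω) μ from
      hsq.sub (hint.const_mul (2 * c))) (integrable_const _),
    integral_sub hsq (show Integrable (fun ω => 2 * c * f ω) μ from hint.const_mul (2 * c)),
    integral_const_mul _ _, integral_const]
  simp

/-- Bound on a single mixed term. -/
lemma aux_bound {Ω : Type*} {m F : MeasurableSpace Ω} {μ : @Measure Ω F}
    [IsProbabilityMeasure μ] (hm : m ≤ F) (θ C : ℝ) {Y X : Ω → ℝ}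
    (hY : MemLp Y 2 μ) (hX : MemLp X 2 μ) (hunb : ∫ ω, Y ω ∂μ = θ)
    (hbdd : (∫ ω, X ω ^ 2 ∂μ) - (∫ ω, X ω ∂μ) ^ 2 ≤ C) :
    |(∫ ω, (μ[X|m]) ω * (μ[Y|m]) ω ∂μ) - θ * ∫ ω, X ω ∂μ|
      ≤ Real.sqrt ((∫ ω, Y ω ^ 2 ∂μ) - (∫ ω, Y ω ∂μ) ^ 2) * Real.sqrt (max C 0) := by
  have intY : Integrable Y μ := hY.integrable one_le_two
  have intX : Integrable X μ := hX.integrable one_le_two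
  have hmcY : MemLp (μ[Y|m]) 2 μ := (aux_condExp_L2 hm hY).1
  have hmcX : MemLp (μ[X|m]) 2 μ := (aux_condExp_L2 hm hX).1
  set c : ℝ := ∫ ω, X ω ∂μ with hc
  have hBmem : MemLp (fun ω => (μ[Y|m]) ω - θ) 2 μ := hmcY.sub (memLp_const θ)
  have hDmem : MemLp (fun ω => (μ[X|m]) ω - c) 2 μ := hmcX.sub (memLp_const c)
  have icY : Integrable (μ[Y|m]) μ := integrable_condExp
  have icX : Integrable (μ[X|m]) μ := integrable_condExp
  have ie : Integrable (fun ω => (μ[X|m]) ω * (μ[Y|m]) ω) μ := aux_integrable_mul hmcX hmcY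
  -- the mixed term equals a centered covariance-type integral
  have hBD : ∫ ω, ((μ[Y|m]) ω - θ) * ((μ[X|m]) ω - c) ∂μ
      = (∫ ω, (μ[X|m]) ω * (μ[Y|m]) ω ∂μ) - θ * c := by
    rw [show (fun ω => ((μ[Y|m]) ω - θ) * ((μ[X|m]) ω - c))
        = fun ω => (μ[X|m]) ω * (μ[Y|m]) ω - c * (μ[Y|m]) ω - θ * (μ[X|m]) ω + θ * c from
        funext fun ω => by ring,
      integral_add (show Integrable (fun ω => (μ[X|m]) ω * (μ[Y|m]) ω - c * (μ[Y|m]) ω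
          - θ * (μ[X|m]) ω) μ from
        (ie.sub (icY.const_mul c)).sub (icX.const_mul θ)) (integrable_const _),
      integral_sub (show Integrable (fun ω => (μ[X|m]) ω * (μ[Y|m]) ω - c * (μ[Y|m]) ω) μ from
        ie.sub (icY.const_mul c)) (show Integrable (fun ω => θ * (μ[X|m]) ω) μ from
        icX.const_mul θ),
      integral_sub ie (show Integrable (fun ω => c * (μ[Y|m]) ω) μ from icY.const_mul c),
      integral_const_mul _ _, integral_const_mul _ _, integral_condExp hm, integral_condExp hm,
      integral_const, hunb, ← hc]
    simp
    ring
  -- bound the squared norms of the centered factors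
  have hB2 : ∫ ω, ((μ[Y|m]) ω - θ) ^ 2 ∂μ ≤ (∫ ω, Y ω ^ 2 ∂μ) - (∫ ω, Y ω ∂μ) ^ 2 := by
    have hYc : MemLp (fun ω => Y ω - θ) 2 μ := hY.sub (memLp_const θ)
    have hae : (fun ω => (μ[Y|m]) ω - θ) =ᵐ[μ] μ[(fun ω => Y ω - θ)|m] := by
      have h1 : μ[(fun ω => Y ω - θ)|m] =ᵐ[μ] fun ω => (μ[Y|m]) ω - (μ[(fun _ => θ)|m]) ω :=
        condExp_sub intY (integrable_const θ) m
      have h2 : μ[(fun _ : Ω => θ)|m] = fun _ => θ := condExp_const hm θ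
      filter_upwards [h1] with ω h1
      rw [h1, h2]
    calc ∫ ω, ((μ[Y|m]) ω - θ) ^ 2 ∂μ = ∫ ω, (μ[(fun ω => Y ω - θ)|m]) ω ^ 2 ∂μ := by
          refine integral_congr_ae ?_
          filter_upwards [hae] with ω h
          rw [h]
      _ ≤ ∫ ω, (Y ω - θ) ^ 2 ∂μ := (aux_condExp_L2 hm hYc).2
      _ = (∫ ω, Y ω ^ 2 ∂μ) - (∫ ω, Y ω ∂μ) ^ 2 := by
          rw [aux_centered_sq hY θ, hunb]; ring
  have hD2 : ∫ ω, ((μ[X|m]) ω - c) ^ 2 ∂μ ≤ max C 0 := by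
    have hXc : MemLp (fun ω => X ω - c) 2 μ := hX.sub (memLp_const c)
    have hae : (fun ω => (μ[X|m]) ω - c) =ᵐ[μ] μ[(fun ω => X ω - c)|m] := by
      have h1 : μ[(fun ω => X ω - c)|m] =ᵐ[μ] fun ω => (μ[X|m]) ω - (μ[(fun _ => c)|m]) ω :=
        condExp_sub intX (integrable_const c) m
      have h2 : μ[(fun _ : Ω => c)|m] = fun _ => c := condExp_const hm c
      filter_upwards [h1] with ω h1
      rw [h1, h2]
    calc ∫ ω, ((μ[X|m]) ω - c) ^ 2 ∂μ = ∫ ω, (μ[(fun ω => X ω - c)|m]) ω ^ 2 ∂μ := by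
          refine integral_congr_ae ?_
          filter_upwards [hae] with ω h
          rw [h]
      _ ≤ ∫ ω, (X ω - c) ^ 2 ∂μ := (aux_condExp_L2 hm hXc).2
      _ = (∫ ω, X ω ^ 2 ∂μ) - (∫ ω, X ω ∂μ) ^ 2 := by
          rw [aux_centered_sq hX c, ← hc]; ring
      _ ≤ max C 0 := le_trans hbdd (le_max_left _ _)
  calc |(∫ ω, (μ[X|m]) ω * (μ[Y|m]) ω ∂μ) - θ * ∫ ω, X ω ∂μ|
      = |∫ ω, ((μ[Y|m]) ω - θ) * ((μ[X|m]) ω - c) ∂μ| := by rw [hBD, ← hc]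
    _ ≤ Real.sqrt (∫ ω, ((μ[Y|m]) ω - θ) ^ 2 ∂μ)
        * Real.sqrt (∫ ω, ((μ[X|m]) ω - c) ^ 2 ∂μ) := aux_cauchy_schwarz hBmem hDmem
    _ ≤ Real.sqrt ((∫ ω, Y ω ^ 2 ∂μ) - (∫ ω, Y ω ∂μ) ^ 2) * Real.sqrt (max C 0) := by
        exact mul_le_mul (Real.sqrt_le_sqrt hB2) (Real.sqrt_le_sqrt hD2)
          (Real.sqrt_nonneg _) (Real.sqrt_nonneg _)

lemma aux_eq {Ω : Type*} {m F : MeasurableSpace Ω} {μ : @Measure Ω F}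
    [IsProbabilityMeasure μ] (hm : m ≤ F) (θ : ℝ) {Y X₁ X₂ : Ω → ℝ}
    (hY : MemLp Y 2 μ) (hX₁ : MemLp X₁ 2 μ) (hX₂ : MemLp X₂ 2 μ)
    (hmcY : MemLp (μ[Y|m]) 2 μ) (hmc₁ : MemLp (μ[X₁|m]) 2 μ) (hmc₂ : MemLp (μ[X₂|m]) 2 μ)
    (hunb : ∫ ω, Y ω ∂μ = θ) :
    ((∫ ω, ((μ[Y|m]) ω - θ) * (((μ[X₁|m]) ω - θ) - ((μ[X₂|m]) ω - θ)) ∂μ)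
        - (∫ ω, ((μ[Y|m]) ω - θ) ∂μ)
          * ∫ ω, (((μ[X₁|m]) ω - θ) - ((μ[X₂|m]) ω - θ)) ∂μ)
      = ((∫ ω, (μ[X₁|m]) ω * (μ[Y|m]) ω ∂μ) - (∫ ω, (μ[X₂|m]) ω * (μ[Y|m]) ω ∂μ)
          - θ * (∫ ω, X₁ ω ∂μ) + θ * (∫ ω, X₂ ω ∂μ))
    ∧ (∫ ω, (((μ[(fun x => (X₁ x - Y x) ^ 2)|m]) ω
              - ((μ[(fun x => Y x ^ 2)|m]) ω - ((μ[Y|m]) ω) ^ 2)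
              + 2 * ((μ[(fun x => X₁ x * Y x)|m]) ω
                  - (μ[X₁|m]) ω * (μ[Y|m]) ω))
            - ((μ[(fun x => (X₂ x - Y x) ^ 2)|m]) ω
              - ((μ[(fun x => Y x ^ 2)|m]) ω - ((μ[Y|m]) ω) ^ 2)
              + 2 * ((μ[(fun x => X₂ x * Y x)|m]) ω
                  - (μ[X₂|m]) ω * (μ[Y|m]) ω))) ∂μ)
          - ((∫ ω, (X₁ ω - θ) ^ 2 ∂μ) - ∫ ω, (X₂ ω - θ) ^ 2 ∂μ)
      = (-2 : ℝ) * ((∫ ω, (μ[X₁|m]) ω * (μ[Y|m]) ω ∂μ)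
            - (∫ ω, (μ[X₂|m]) ω * (μ[Y|m]) ω ∂μ)
          - θ * (∫ ω, X₁ ω ∂μ) + θ * (∫ ω, X₂ ω ∂μ)) := by
  have intY : Integrable Y μ := hY.integrable one_le_two
  have intX₁ : Integrable X₁ μ := hX₁.integrable one_le_two
  have intX₂ : Integrable X₂ μ := hX₂.integrable one_le_two
  have icY : Integrable (μ[Y|m]) μ := integrable_condExp
  have ic₁ : Integrable (μ[X₁|m]) μ := integrable_condExp
  have ic₂ : Integrable (μ[X₂|m]) μ := integrable_condExp
  have ie₁ : Integrable (fun ω => (μ[X₁|m]) ω * (μ[Y|m]) ω) μ := aux_integrable_mul hmc₁ hmcY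
  have ie₂ : Integrable (fun ω => (μ[X₂|m]) ω * (μ[Y|m]) ω) μ := aux_integrable_mul hmc₂ hmcY
  have hI₂ : ∫ ω, ((μ[Y|m]) ω - θ) ∂μ = 0 := by
    rw [integral_sub icY (integrable_const θ), integral_condExp hm, hunb, integral_const]
    simp
  constructor
  · -- part 1
    have h1 : (fun ω => ((μ[Y|m]) ω - θ) * (((μ[X₁|m]) ω - θ) - ((μ[X₂|m]) ω - θ)))
        = fun ω => (μ[X₁|m]) ω * (μ[Y|m]) ω - (μ[X₂|m]) ω * (μ[Y|m]) ω
            - θ * (μ[X₁|m]) ω + θ * (μ[X₂|m]) ω := funext fun ω => by ring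
    have iA1 : Integrable (fun ω => (μ[X₁|m]) ω * (μ[Y|m]) ω - (μ[X₂|m]) ω * (μ[Y|m]) ω) μ :=
      ie₁.sub ie₂
    have iθ₁ : Integrable (fun ω => θ * (μ[X₁|m]) ω) μ := ic₁.const_mul θ
    have iθ₂ : Integrable (fun ω => θ * (μ[X₂|m]) ω) μ := ic₂.const_mul θ
    have iA2 : Integrable (fun ω => (μ[X₁|m]) ω * (μ[Y|m]) ω - (μ[X₂|m]) ω * (μ[Y|m]) ω
        - θ * (μ[X₁|m]) ω) μ := iA1.sub iθ₁
    rw [hI₂, zero_mul, sub_zero, h1,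
      integral_add iA2 iθ₂, integral_sub iA1 iθ₁,
      integral_sub ie₁ ie₂, integral_const_mul _ _, integral_const_mul _ _,
      integral_condExp hm, integral_condExp hm]
  · -- part 2
    have iq₁ : Integrable (fun x => (X₁ x - Y x) ^ 2) μ := aux_integrable_sq (hX₁.sub hY)
    have iq₂ : Integrable (fun x => (X₂ x - Y x) ^ 2) μ := aux_integrable_sq (hX₂.sub hY)
    have is₁ : Integrable (fun x => X₁ x * Y x) μ := aux_integrable_mul hX₁ hY
    have is₂ : Integrable (fun x => X₂ x * Y x) μ := aux_integrable_mul hX₂ hY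
    have iY2 : Integrable (fun x => Y x ^ 2) μ := aux_integrable_sq hY
    have iX₁2 : Integrable (fun x => X₁ x ^ 2) μ := aux_integrable_sq hX₁
    have iX₂2 : Integrable (fun x => X₂ x ^ 2) μ := aux_integrable_sq hX₂
    have ig₁ : Integrable (μ[(fun x => (X₁ x - Y x) ^ 2)|m]) μ := integrable_condExp
    have ig₂ : Integrable (μ[(fun x => (X₂ x - Y x) ^ 2)|m]) μ := integrable_condExp
    have ig₃ : Integrable (μ[(fun x => X₁ x * Y x)|m]) μ := integrable_condExp
    have ig₄ : Integrable (μ[(fun x => X₂ x * Y x)|m]) μ := integrable_condExp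
    have hbig : (fun ω => (((μ[(fun x => (X₁ x - Y x) ^ 2)|m]) ω
              - ((μ[(fun x => Y x ^ 2)|m]) ω - ((μ[Y|m]) ω) ^ 2)
              + 2 * ((μ[(fun x => X₁ x * Y x)|m]) ω
                  - (μ[X₁|m]) ω * (μ[Y|m]) ω))
            - ((μ[(fun x => (X₂ x - Y x) ^ 2)|m]) ω
              - ((μ[(fun x => Y x ^ 2)|m]) ω - ((μ[Y|m]) ω) ^ 2)
              + 2 * ((μ[(fun x => X₂ x * Y x)|m]) ω
                  - (μ[X₂|m]) ω * (μ[Y|m]) ω))))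
        = fun ω => (μ[(fun x => (X₁ x - Y x) ^ 2)|m]) ω
            - (μ[(fun x => (X₂ x - Y x) ^ 2)|m]) ω
            + 2 * (μ[(fun x => X₁ x * Y x)|m]) ω
            - 2 * (μ[(fun x => X₂ x * Y x)|m]) ω
            - 2 * ((μ[X₁|m]) ω * (μ[Y|m]) ω)
            + 2 * ((μ[X₂|m]) ω * (μ[Y|m]) ω) := funext fun ω => by ring
    have hq₁ : ∫ ω, (X₁ ω - Y ω) ^ 2 ∂μ
        = ∫ ω, X₁ ω ^ 2 ∂μ - 2 * ∫ ω, X₁ ω * Y ω ∂μ + ∫ ω, Y ω ^ 2 ∂μ := by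
      rw [show (fun ω => (X₁ ω - Y ω) ^ 2)
          = fun ω => X₁ ω ^ 2 - 2 * (X₁ ω * Y ω) + Y ω ^ 2 from funext fun ω => by ring,
        integral_add (show Integrable (fun ω => X₁ ω ^ 2 - 2 * (X₁ ω * Y ω)) μ from
          iX₁2.sub (is₁.const_mul 2)) iY2,
        integral_sub iX₁2 (show Integrable (fun ω => 2 * (X₁ ω * Y ω)) μ from
          is₁.const_mul 2), integral_const_mul _ _]
    have hq₂ : ∫ ω, (X₂ ω - Y ω) ^ 2 ∂μ
        = ∫ ω, X₂ ω ^ 2 ∂μ - 2 * ∫ ω, X₂ ω * Y ω ∂μ + ∫ ω, Y ω ^ 2 ∂μ := by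
      rw [show (fun ω => (X₂ ω - Y ω) ^ 2)
          = fun ω => X₂ ω ^ 2 - 2 * (X₂ ω * Y ω) + Y ω ^ 2 from funext fun ω => by ring,
        integral_add (show Integrable (fun ω => X₂ ω ^ 2 - 2 * (X₂ ω * Y ω)) μ from
          iX₂2.sub (is₂.const_mul 2)) iY2,
        integral_sub iX₂2 (show Integrable (fun ω => 2 * (X₂ ω * Y ω)) μ from
          is₂.const_mul 2), integral_const_mul _ _]
    have hr₁ : ∫ ω, (X₁ ω - θ) ^ 2 ∂μ
        = ∫ ω, X₁ ω ^ 2 ∂μ - 2 * θ * ∫ ω, X₁ ω ∂μ + θ ^ 2 := by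
      rw [show (fun ω => (X₁ ω - θ) ^ 2)
          = fun ω => X₁ ω ^ 2 - 2 * θ * X₁ ω + θ ^ 2 from funext fun ω => by ring,
        integral_add (show Integrable (fun ω => X₁ ω ^ 2 - 2 * θ * X₁ ω) μ from
          iX₁2.sub (intX₁.const_mul (2 * θ))) (integrable_const _),
        integral_sub iX₁2 (show Integrable (fun ω => 2 * θ * X₁ ω) μ from
          intX₁.const_mul (2 * θ)), integral_const_mul _ _, integral_const]
      simp
    have hr₂ : ∫ ω, (X₂ ω - θ) ^ 2 ∂μ
        = ∫ ω, X₂ ω ^ 2 ∂μ - 2 * θ * ∫ ω, X₂ ω ∂μ + θ ^ 2 := by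
      rw [show (fun ω => (X₂ ω - θ) ^ 2)
          = fun ω => X₂ ω ^ 2 - 2 * θ * X₂ ω + θ ^ 2 from funext fun ω => by ring,
        integral_add (show Integrable (fun ω => X₂ ω ^ 2 - 2 * θ * X₂ ω) μ from
          iX₂2.sub (intX₂.const_mul (2 * θ))) (integrable_const _),
        integral_sub iX₂2 (show Integrable (fun ω => 2 * θ * X₂ ω) μ from
          intX₂.const_mul (2 * θ)), integral_const_mul _ _, integral_const]
      simp
    have iB1 : Integrable (fun ω => (μ[(fun x => (X₁ x - Y x) ^ 2)|m]) ω
        - (μ[(fun x => (X₂ x - Y x) ^ 2)|m]) ω) μ := ig₁.sub ig₂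
    have ih3 : Integrable (fun ω => 2 * (μ[(fun x => X₁ x * Y x)|m]) ω) μ := ig₃.const_mul 2
    have ih4 : Integrable (fun ω => 2 * (μ[(fun x => X₂ x * Y x)|m]) ω) μ := ig₄.const_mul 2
    have ihe1 : Integrable (fun ω => 2 * ((μ[X₁|m]) ω * (μ[Y|m]) ω)) μ := ie₁.const_mul 2
    have ihe2 : Integrable (fun ω => 2 * ((μ[X₂|m]) ω * (μ[Y|m]) ω)) μ := ie₂.const_mul 2
    have iB2 : Integrable (fun ω => (μ[(fun x => (X₁ x - Y x) ^ 2)|m]) ω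
        - (μ[(fun x => (X₂ x - Y x) ^ 2)|m]) ω
        + 2 * (μ[(fun x => X₁ x * Y x)|m]) ω) μ := iB1.add ih3
    have iB3 : Integrable (fun ω => (μ[(fun x => (X₁ x - Y x) ^ 2)|m]) ω
        - (μ[(fun x => (X₂ x - Y x) ^ 2)|m]) ω
        + 2 * (μ[(fun x => X₁ x * Y x)|m]) ω
        - 2 * (μ[(fun x => X₂ x * Y x)|m]) ω) μ := iB2.sub ih4
    have iB4 : Integrable (fun ω => (μ[(fun x => (X₁ x - Y x) ^ 2)|m]) ω
        - (μ[(fun x => (X₂ x - Y x) ^ 2)|m]) ω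
        + 2 * (μ[(fun x => X₁ x * Y x)|m]) ω
        - 2 * (μ[(fun x => X₂ x * Y x)|m]) ω
        - 2 * ((μ[X₁|m]) ω * (μ[Y|m]) ω)) μ := iB3.sub ihe1
    rw [hbig, integral_add iB4 ihe2, integral_sub iB3 ihe1, integral_sub iB2 ih4,
      integral_add iB1 ih3,
      integral_sub ig₁ ig₂, integral_const_mul _ _, integral_const_mul _ _, integral_const_mul _ _,
      integral_const_mul _ _, integral_condExp hm, integral_condExp hm, integral_condExp hm,
      integral_condExp hm, hq₁, hq₂, hr₁, hr₂]
    ring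

/-- Consider sequences indexed by the sample size `n`:
sub-σ-algebras `𝒢ₙ ⊆ ℱ` and random variables `Yₙ, Xₙ¹, Xₙ² ∈ L²` with
`E[Yₙ] = θ` for every `n`.  Define `bₙ = E[Yₙ|𝒢ₙ] − θ`,
`dₙʲ = E[Xₙʲ|𝒢ₙ] − θ`, and `eₙ = −2·Cov(bₙ, dₙ¹ − dₙ²)`.  If
`Var(Yₙ) → 0` and `Var(Xₙʲ) ≤ C` for all `n` and `j = 1, 2`, then `eₙ → 0`;
consequently, with `vₙ` and `cₙʲ` the conditional variance of `Yₙ` and the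
conditional covariance of `Xₙʲ` and `Yₙ` given `𝒢ₙ`, and
`scoreₙʲ = E[(Xₙʲ − Yₙ)² | 𝒢ₙ] − vₙ + 2cₙʲ`, the quantity
`E[scoreₙ¹ − scoreₙ²] − (E[(Xₙ¹ − θ)²] − E[(Xₙ² − θ)²])` converges to `0`. -/
theorem adjusted_score_consistency
    {Ω : Type*} {F : MeasurableSpace Ω} {μ : Measure Ω} [IsProbabilityMeasure μ]
    (G : ℕ → MeasurableSpace Ω) (hG : ∀ n, G n ≤ F)
    (θ : ℝ) (Y X₁ X₂ : ℕ → Ω → ℝ)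
    (hY : ∀ n, MemLp (Y n) 2 μ)
    (hX₁ : ∀ n, MemLp (X₁ n) 2 μ) (hX₂ : ∀ n, MemLp (X₂ n) 2 μ)
    (hunbiased : ∀ n, ∫ ω, Y n ω ∂μ = θ)
    (hvarY : Tendsto (fun n => (∫ ω, Y n ω ^ 2 ∂μ) - (∫ ω, Y n ω ∂μ) ^ 2)
      atTop (nhds 0))
    (C : ℝ)
    (hbdd₁ : ∀ n, (∫ ω, X₁ n ω ^ 2 ∂μ) - (∫ ω, X₁ n ω ∂μ) ^ 2 ≤ C)
    (hbdd₂ : ∀ n, (∫ ω, X₂ n ω ^ 2 ∂μ) - (∫ ω, X₂ n ω ∂μ) ^ 2 ≤ C) :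
    Tendsto (fun n => (-2 : ℝ)
        * ((∫ ω, ((μ[Y n|G n]) ω - θ)
              * (((μ[X₁ n|G n]) ω - θ) - ((μ[X₂ n|G n]) ω - θ)) ∂μ)
          - (∫ ω, ((μ[Y n|G n]) ω - θ) ∂μ)
            * ∫ ω, (((μ[X₁ n|G n]) ω - θ) - ((μ[X₂ n|G n]) ω - θ)) ∂μ))
      atTop (nhds 0)
    ∧ Tendsto (fun n =>
        (∫ ω, (((μ[(fun x => (X₁ n x - Y n x) ^ 2)|G n]) ω
              - ((μ[(fun x => Y n x ^ 2)|G n]) ω - ((μ[Y n|G n]) ω) ^ 2)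
              + 2 * ((μ[(fun x => X₁ n x * Y n x)|G n]) ω
                  - (μ[X₁ n|G n]) ω * (μ[Y n|G n]) ω))
            - ((μ[(fun x => (X₂ n x - Y n x) ^ 2)|G n]) ω
              - ((μ[(fun x => Y n x ^ 2)|G n]) ω - ((μ[Y n|G n]) ω) ^ 2)
              + 2 * ((μ[(fun x => X₂ n x * Y n x)|G n]) ω
                  - (μ[X₂ n|G n]) ω * (μ[Y n|G n]) ω))) ∂μ)
          - ((∫ ω, (X₁ n ω - θ) ^ 2 ∂μ) - ∫ ω, (X₂ n ω - θ) ^ 2 ∂μ))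
      atTop (nhds 0) := by
  have heq := fun n => aux_eq (μ := μ) (hG n) θ (hY n) (hX₁ n) (hX₂ n)
      ((aux_condExp_L2 (hG n) (hY n)).1) ((aux_condExp_L2 (hG n) (hX₁ n)).1)
      ((aux_condExp_L2 (hG n) (hX₂ n)).1) (hunbiased n)
  have h0 : Tendsto (fun n => Real.sqrt ((∫ ω, Y n ω ^ 2 ∂μ) - (∫ ω, Y n ω ∂μ) ^ 2))
      atTop (nhds 0) := by
    have := (Real.continuous_sqrt.tendsto 0).comp hvarY
    simpa [Function.comp_def] using this
  have hgt : Tendsto (fun n => 2 * ((Real.sqrt ((∫ ω, Y n ω ^ 2 ∂μ) - (∫ ω, Y n ω ∂μ) ^ 2)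
        * Real.sqrt (max C 0))
      + (Real.sqrt ((∫ ω, Y n ω ^ 2 ∂μ) - (∫ ω, Y n ω ∂μ) ^ 2) * Real.sqrt (max C 0))))
      atTop (nhds 0) := by
    have h1 := ((h0.mul_const (Real.sqrt (max C 0))).add
      (h0.mul_const (Real.sqrt (max C 0)))).const_mul 2
    simpa using h1
  have htendV : Tendsto (fun n => (-2 : ℝ)
      * ((∫ ω, (μ[X₁ n|G n]) ω * (μ[Y n|G n]) ω ∂μ)
        - (∫ ω, (μ[X₂ n|G n]) ω * (μ[Y n|G n]) ω ∂μ)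
        - θ * (∫ ω, X₁ n ω ∂μ) + θ * (∫ ω, X₂ n ω ∂μ))) atTop (nhds 0) := by
    refine squeeze_zero_norm (fun n => ?_) hgt
    have h1 := aux_bound (hG n) θ C (hY n) (hX₁ n) (hunbiased n) (hbdd₁ n)
    have h2 := aux_bound (hG n) θ C (hY n) (hX₂ n) (hunbiased n) (hbdd₂ n)
    have hX : |(∫ ω, (μ[X₁ n|G n]) ω * (μ[Y n|G n]) ω ∂μ)
        - (∫ ω, (μ[X₂ n|G n]) ω * (μ[Y n|G n]) ω ∂μ)
        - θ * (∫ ω, X₁ n ω ∂μ) + θ * (∫ ω, X₂ n ω ∂μ)|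
        ≤ (Real.sqrt ((∫ ω, Y n ω ^ 2 ∂μ) - (∫ ω, Y n ω ∂μ) ^ 2) * Real.sqrt (max C 0))
          + (Real.sqrt ((∫ ω, Y n ω ^ 2 ∂μ) - (∫ ω, Y n ω ∂μ) ^ 2) * Real.sqrt (max C 0)) := by
      have hrw : (∫ ω, (μ[X₁ n|G n]) ω * (μ[Y n|G n]) ω ∂μ)
          - (∫ ω, (μ[X₂ n|G n]) ω * (μ[Y n|G n]) ω ∂μ)
          - θ * (∫ ω, X₁ n ω ∂μ) + θ * (∫ ω, X₂ n ω ∂μ)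
          = ((∫ ω, (μ[X₁ n|G n]) ω * (μ[Y n|G n]) ω ∂μ) - θ * (∫ ω, X₁ n ω ∂μ))
            - ((∫ ω, (μ[X₂ n|G n]) ω * (μ[Y n|G n]) ω ∂μ) - θ * (∫ ω, X₂ n ω ∂μ)) := by ring
      rw [hrw]
      exact (abs_sub _ _).trans (add_le_add h1 h2)
    have habs : ‖(-2 : ℝ)
        * ((∫ ω, (μ[X₁ n|G n]) ω * (μ[Y n|G n]) ω ∂μ)
          - (∫ ω, (μ[X₂ n|G n]) ω * (μ[Y n|G n]) ω ∂μ)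
          - θ * (∫ ω, X₁ n ω ∂μ) + θ * (∫ ω, X₂ n ω ∂μ))‖
        = 2 * |(∫ ω, (μ[X₁ n|G n]) ω * (μ[Y n|G n]) ω ∂μ)
          - (∫ ω, (μ[X₂ n|G n]) ω * (μ[Y n|G n]) ω ∂μ)
          - θ * (∫ ω, X₁ n ω ∂μ) + θ * (∫ ω, X₂ n ω ∂μ)| := by
      rw [Real.norm_eq_abs, abs_mul]
      norm_num
    rw [habs]
    exact mul_le_mul_of_nonneg_left hX (by norm_num)
  constructor
  · refine htendV.congr fun n => ?_
    rw [(heq n).1]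
  · refine htendV.congr fun n => ?_
    exact ((heq n).2).symm
end
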